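/- The fusion-pMOM density on ℝ^p defined by p(θ | σ²) = C_p (∏_{j=1}^p θ_j²)(∏_{j=2}^p (θ_j - θ_{j-1})²) (2πσ²)^{-p/2} σ^{-2p - 2(p-1)} exp(-θᵀθ/(2σ²)), with C_p = 2√15/((3+√15)^p - (3-√15)^p), integrates to 1 when σ² = 1. Equivalently, ∫_{ℝ^p} (∏_{j=1}^p θ_j²)(∏_{j=2}^p (θ_j - θ_{j-1})²) (2π)^{-p/2} exp(-‖θ‖²/2) dθ = 1/C_p = ((3+√15)^p - (3-√15)^p)/(2√15). -/

import Mathlib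

open MeasureTheory Real


lemma pow_le_factorial_mul_exp (k : ℕ) {x : ℝ} (hx : 0 ≤ x) :
    x ^ k ≤ k.factorial * Real.exp x := by
  have h := Real.sum_le_exp_of_nonneg hx (k + 1)
  have h2 : x ^ k / k.factorial ≤ ∑ i ∈ Finset.range (k + 1), x ^ i / i.factorial := by
    refine Finset.single_le_sum (f := fun i => x ^ i / (i.factorial : ℝ)) (fun i _ => by positivity)
      (Finset.self_mem_range_succ k)
  have hk : (0:ℝ) < k.factorial := by positivity
  rw [div_le_iff₀ hk] at *
  nlinarith [h2, h, Real.exp_pos x, hk]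

lemma integrable_pow_gauss (k : ℕ) :
    Integrable (fun x : ℝ => x ^ k * Real.exp (-x ^ 2 / 2)) := by
  have hb : (0:ℝ) < 1/4 := by norm_num
  refine Integrable.mono' (((integrable_exp_neg_mul_sq hb).const_mul
      ((k.factorial : ℝ) * Real.exp 1))) ?_ (Filter.Eventually.of_forall fun x => ?_)
  · exact ((continuous_pow k).mul (by continuity)).aestronglyMeasurable
  · have h1 : |x| ^ k ≤ k.factorial * Real.exp |x| := pow_le_factorial_mul_exp k (abs_nonneg x)
    have h2 : Real.exp (|x| - x ^ 2 / 2) ≤ Real.exp (1 - 1/4 * x^2) := by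
      apply Real.exp_le_exp.2; nlinarith [sq_nonneg (|x| - 2), sq_abs x]
    calc ‖x ^ k * Real.exp (-x ^ 2 / 2)‖ = |x| ^ k * Real.exp (-x^2/2) := by
          rw [norm_mul, Real.norm_eq_abs, Real.norm_eq_abs, abs_pow,
            abs_of_pos (Real.exp_pos _)]
      _ ≤ (k.factorial * Real.exp |x|) * Real.exp (-x^2/2) :=
          mul_le_mul_of_nonneg_right h1 (Real.exp_pos _).le
      _ = k.factorial * Real.exp (|x| - x^2/2) := by rw [mul_assoc, ← Real.exp_add]; ring_nf
      _ ≤ k.factorial * Real.exp (1 - 1/4*x^2) := by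
          exact mul_le_mul_of_nonneg_left h2 (by positivity)
      _ = k.factorial * Real.exp 1 * Real.exp (-(1/4) * x ^ 2) := by
          rw [mul_assoc, ← Real.exp_add]; ring_nf

lemma moment_rec (k : ℕ) :
    (∫ x : ℝ, x ^ (k+2) * Real.exp (-x ^ 2 / 2)) =
      (k+1) * ∫ x : ℝ, x ^ k * Real.exp (-x ^ 2 / 2) := by
  have hderiv : ∀ x : ℝ, HasDerivAt (fun x : ℝ => x ^ (k+1) * Real.exp (-x ^ 2 / 2))
      ((k+1) * x ^ k * Real.exp (-x^2/2) - x ^ (k+2) * Real.exp (-x^2/2)) x := by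
    intro x
    have h1 : HasDerivAt (fun x : ℝ => x ^ (k+1)) ((k+1) * x ^ k) x := by
      simpa using hasDerivAt_pow (k+1) x
    have h2 : HasDerivAt (fun x : ℝ => Real.exp (-x ^ 2 / 2)) (-x * Real.exp (-x^2/2)) x := by
      have : HasDerivAt (fun x : ℝ => -x ^ 2 / 2) (-x) x := by
        have := (hasDerivAt_pow 2 x).neg.div_const 2
        simpa using this.congr_deriv (by ring)
      simpa [mul_comm] using this.exp
    have := h1.fun_mul h2
    exact this.congr_deriv (by ring)
  have hint : Integrable (fun x : ℝ =>
      (k+1) * x ^ k * Real.exp (-x^2/2) - x ^ (k+2) * Real.exp (-x^2/2)) := by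
    refine Integrable.sub ?_ (integrable_pow_gauss (k+2))
    simpa [mul_assoc] using (integrable_pow_gauss k).const_mul ((k:ℝ)+1)
  have h0 := integral_eq_zero_of_hasDerivAt_of_integrable hderiv hint (integrable_pow_gauss (k+1))
  rw [integral_sub (by simpa [mul_assoc] using (integrable_pow_gauss k).const_mul ((k:ℝ)+1))
      (integrable_pow_gauss (k+2))] at h0
  have := sub_eq_zero.mp h0
  rw [← this]
  simp_rw [mul_assoc]
  rw [integral_const_mul]

lemma moment_zero : (∫ x : ℝ, Real.exp (-x ^ 2 / 2)) = Real.sqrt (2 * π) := by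
  have := integral_gaussian (1/2)
  simp only [show ∀ x : ℝ, -(1/2) * x ^ 2 = -x^2/2 by intro x; ring] at this
  rw [this]; congr 1; rw [div_div_eq_mul_div]; ring

lemma moment_one : (∫ x : ℝ, x ^ 1 * Real.exp (-x ^ 2 / 2)) = 0 := by
  have hderiv : ∀ x : ℝ, HasDerivAt (fun x : ℝ => -Real.exp (-x ^ 2 / 2))
      (x ^ 1 * Real.exp (-x^2/2)) x := by
    intro x
    have : HasDerivAt (fun x : ℝ => -x ^ 2 / 2) (-x) x := by
      have := (hasDerivAt_pow 2 x).neg.div_const 2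
      simpa using this.congr_deriv (by ring)
    have := this.exp.fun_neg
    exact this.congr_deriv (by ring)
  have hi : Integrable (fun x : ℝ => -Real.exp (-x ^ 2 / 2)) := by
    simpa only [pow_zero, one_mul] using (integrable_pow_gauss 0).fun_neg
  exact integral_eq_zero_of_hasDerivAt_of_integrable hderiv (integrable_pow_gauss 1) hi


noncomputable def gs (x : ℝ) : ℝ := (2 * π) ^ (-(1:ℝ)/2) * Real.exp (-x ^ 2 / 2)

lemma gs_nonneg (x : ℝ) : 0 ≤ gs x := by unfold gs; positivity
lemma gs_continuous : Continuous gs := by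
  unfold gs; exact continuous_const.mul (by continuity)

lemma c_mul_sqrt : (2 * π) ^ (-(1:ℝ)/2) * Real.sqrt (2 * π) = 1 := by
  have h2 : (0:ℝ) < 2 * π := by positivity
  rw [Real.sqrt_eq_rpow, ← Real.rpow_add h2]
  norm_num


lemma integrable_pow_gs (k : ℕ) : Integrable (fun x : ℝ => x ^ k * gs x) := by
  unfold gs
  have := (integrable_pow_gauss k).const_mul ((2 * π) ^ (-(1:ℝ)/2))
  refine this.congr (Filter.Eventually.of_forall fun x => by ring)

lemma moment_gs (k : ℕ) (v : ℝ)
    (h : (∫ x : ℝ, x ^ k * Real.exp (-x ^ 2 / 2)) = v * Real.sqrt (2 * π)) :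
    (∫ x : ℝ, x ^ k * gs x) = v := by
  unfold gs
  have : (fun x : ℝ => x ^ k * ((2 * π) ^ (-(1:ℝ)/2) * Real.exp (-x ^ 2 / 2)))
      = fun x : ℝ => (2 * π) ^ (-(1:ℝ)/2) * (x ^ k * Real.exp (-x ^ 2 / 2)) := by
    funext x; ring
  rw [this, integral_const_mul, h]
  calc (2 * π) ^ (-(1:ℝ)/2) * (v * Real.sqrt (2*π))
      = v * ((2 * π) ^ (-(1:ℝ)/2) * Real.sqrt (2*π)) := by ring
    _ = v := by rw [c_mul_sqrt, mul_one]

lemma mgs0 : (∫ x : ℝ, x ^ 0 * gs x) = 1 := moment_gs 0 1 (by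
  simp only [pow_zero, one_mul]; rw [moment_zero])
lemma mgs1 : (∫ x : ℝ, x ^ 1 * gs x) = 0 := moment_gs 1 0 (by rw [moment_one, zero_mul])
lemma mgs2 : (∫ x : ℝ, x ^ 2 * gs x) = 1 := moment_gs 2 1 (by
  have := moment_rec 0; simp only [pow_zero, one_mul] at this ⊢
  rw [show ((0:ℕ)+2) = 2 from rfl] at this
  rw [this, moment_zero]; push_cast; ring)
lemma mgs3 : (∫ x : ℝ, x ^ 3 * gs x) = 0 := moment_gs 3 0 (by
  have := moment_rec 1; rw [show ((1:ℕ)+2) = 3 from rfl] at this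
  rw [this, moment_one]; push_cast; ring)
lemma mgs4 : (∫ x : ℝ, x ^ 4 * gs x) = 3 := moment_gs 4 3 (by
  have h2 := moment_rec 0; simp only [pow_zero, one_mul] at h2
  have := moment_rec 2; rw [show ((2:ℕ)+2) = 4 from rfl] at this
  rw [this, h2, moment_zero]; push_cast; ring)
lemma mgs5 : (∫ x : ℝ, x ^ 5 * gs x) = 0 := moment_gs 5 0 (by
  have h3 := moment_rec 1
  have := moment_rec 3; rw [show ((3:ℕ)+2) = 5 from rfl] at this
  rw [this, h3, moment_one]; push_cast; ring)
lemma mgs6 : (∫ x : ℝ, x ^ 6 * gs x) = 15 := moment_gs 6 15 (by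
  have h2 := moment_rec 0; simp only [pow_zero, one_mul] at h2
  have h4 := moment_rec 2; rw [show ((2:ℕ)+2) = 4 from rfl] at h4
  have := moment_rec 4; rw [show ((4:ℕ)+2) = 6 from rfl] at this
  rw [this, h4, h2, moment_zero]; push_cast; ring)

lemma integrable_quad (a : ℝ) : Integrable (fun x : ℝ => x^2*(x-a)^2 * gs x) := by
  have : (fun x : ℝ => x^2*(x-a)^2 * gs x)
      = fun x => (x^4 * gs x) - (2*a) * (x^3 * gs x) + a^2 * (x^2 * gs x) := by
    funext x; ring
  rw [this]
  exact (((integrable_pow_gs 4).sub ((integrable_pow_gs 3).const_mul (2*a))).add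
    ((integrable_pow_gs 2).const_mul (a^2)))

lemma int_quad (a : ℝ) : (∫ x : ℝ, x^2*(x-a)^2 * gs x) = 3 + a^2 := by
  have : (fun x : ℝ => x^2*(x-a)^2 * gs x)
      = fun x => (x^4 * gs x) - (2*a) * (x^3 * gs x) + a^2 * (x^2 * gs x) := by
    funext x; ring
  have hsub : Integrable (fun x : ℝ => x^4*gs x - 2*a*(x^3*gs x)) := by
    exact (integrable_pow_gs 4).sub ((integrable_pow_gs 3).const_mul (2*a))
  rw [this, integral_add hsub ((integrable_pow_gs 2).const_mul (a^2)),
    integral_sub (integrable_pow_gs 4) ((integrable_pow_gs 3).const_mul (2*a)),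
    integral_const_mul, integral_const_mul, mgs4, mgs3, mgs2]
  ring

lemma integrable_sext (a : ℝ) : Integrable (fun x : ℝ => x^2*x^2*(x-a)^2 * gs x) := by
  have : (fun x : ℝ => x^2*x^2*(x-a)^2 * gs x)
      = fun x => (x^6 * gs x) - (2*a) * (x^5 * gs x) + a^2 * (x^4 * gs x) := by
    funext x; ring
  rw [this]
  exact (((integrable_pow_gs 6).sub ((integrable_pow_gs 5).const_mul (2*a))).add
    ((integrable_pow_gs 4).const_mul (a^2)))

lemma int_sext (a : ℝ) : (∫ x : ℝ, x^2*x^2*(x-a)^2 * gs x) = 15 + 3*a^2 := by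
  have : (fun x : ℝ => x^2*x^2*(x-a)^2 * gs x)
      = fun x => (x^6 * gs x) - (2*a) * (x^5 * gs x) + a^2 * (x^4 * gs x) := by
    funext x; ring
  have hsub : Integrable (fun x : ℝ => x^6*gs x - 2*a*(x^5*gs x)) := by
    exact (integrable_pow_gs 6).sub ((integrable_pow_gs 5).const_mul (2*a))
  rw [this, integral_add hsub ((integrable_pow_gs 4).const_mul (a^2)),
    integral_sub (integrable_pow_gs 6) ((integrable_pow_gs 5).const_mul (2*a)),
    integral_const_mul, integral_const_mul, mgs6, mgs5, mgs4]
  ring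



noncomputable def F (n : ℕ) (θ : Fin (n+1) → ℝ) : ℝ :=
  ((∏ j, θ j ^ 2) * ∏ j : Fin n, (θ j.succ - θ j.castSucc) ^ 2) * ∏ j, gs (θ j)

lemma F_succ (n : ℕ) (x : ℝ) (y : Fin (n+1) → ℝ) :
    F (n+1) (Fin.insertNth (Fin.last (n+1)) x y)
      = F n y * (x^2 * (x - y (Fin.last n))^2 * gs x) := by
  rw [Fin.insertNth_last']
  set θ : Fin (n+2) → ℝ := Fin.snoc y x with hθ
  have h1 : ∀ j : Fin (n+1), θ (Fin.castSucc j) = y j := fun j => by simp [hθ]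
  have h2 : θ (Fin.last (n+1)) = x := by simp [hθ]
  unfold F
  rw [Fin.prod_univ_castSucc (fun j => θ j ^ 2),
      Fin.prod_univ_castSucc (fun j : Fin (n+1) => (θ j.succ - θ j.castSucc) ^ 2),
      Fin.prod_univ_castSucc (fun j => gs (θ j))]
  simp only [Fin.succ_last, Fin.succ_castSucc, h1, h2]
  ring

lemma F_nonneg (n : ℕ) (θ : Fin (n+1) → ℝ) : 0 ≤ F n θ := by
  unfold F
  apply mul_nonneg (mul_nonneg (Finset.prod_nonneg fun j _ => sq_nonneg _)
    (Finset.prod_nonneg fun j _ => sq_nonneg _))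
    (Finset.prod_nonneg fun j _ => gs_nonneg _)

lemma F_continuous (n : ℕ) : Continuous (F n) := by
  unfold F
  exact ((continuous_finset_prod _ fun i _ => (continuous_apply i).pow 2).mul
    (continuous_finset_prod _ fun i _ =>
      ((continuous_apply (i.succ)).sub (continuous_apply (i.castSucc))).pow 2)).mul
    (continuous_finset_prod _ fun i _ => gs_continuous.comp (continuous_apply i))

noncomputable def A (n : ℕ) : ENNReal := ∫⁻ θ : Fin (n+1) → ℝ, ENNReal.ofReal (F n θ)
noncomputable def B (n : ℕ) : ENNReal :=
  ∫⁻ θ : Fin (n+1) → ℝ, ENNReal.ofReal (F n θ * θ (Fin.last n) ^ 2)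

lemma A_zero : A 0 = ENNReal.ofReal 1 := by
  have hF : ∀ θ : Fin 1 → ℝ, F 0 θ = (θ 0) ^ 2 * gs (θ 0) := by
    intro θ; unfold F; simp
  unfold A
  simp_rw [hF]
  have hmp := measurePreserving_funUnique (volume : Measure ℝ) (Fin 1)
  have hg : Measurable fun x : ℝ => ENNReal.ofReal (x ^ 2 * gs x) :=
    ENNReal.measurable_ofReal.comp ((continuous_pow 2).mul gs_continuous).measurable
  have : (∫⁻ θ : Fin 1 → ℝ, ENNReal.ofReal ((θ 0) ^ 2 * gs (θ 0)))
      = ∫⁻ x : ℝ, ENNReal.ofReal (x ^ 2 * gs x) := by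
    rw [← hmp.lintegral_comp hg]
    rfl
  rw [this, ← ofReal_integral_eq_lintegral_ofReal (integrable_pow_gs 2)
    (Filter.Eventually.of_forall fun x => mul_nonneg (sq_nonneg _) (gs_nonneg _)), mgs2]

lemma B_zero : B 0 = ENNReal.ofReal 3 := by
  have hF : ∀ θ : Fin 1 → ℝ, F 0 θ * θ (Fin.last 0) ^ 2 = (θ 0) ^ 4 * gs (θ 0) := by
    intro θ; unfold F; simp [show Fin.last 0 = 0 from rfl]; ring
  unfold B
  simp_rw [hF]
  have hmp := measurePreserving_funUnique (volume : Measure ℝ) (Fin 1)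
  have hg : Measurable fun x : ℝ => ENNReal.ofReal (x ^ 4 * gs x) :=
    ENNReal.measurable_ofReal.comp ((continuous_pow 4).mul gs_continuous).measurable
  have : (∫⁻ θ : Fin 1 → ℝ, ENNReal.ofReal ((θ 0) ^ 4 * gs (θ 0)))
      = ∫⁻ x : ℝ, ENNReal.ofReal (x ^ 4 * gs x) := by
    rw [← hmp.lintegral_comp hg]
    rfl
  rw [this, ← ofReal_integral_eq_lintegral_ofReal (integrable_pow_gs 4)
    (Filter.Eventually.of_forall fun x => mul_nonneg (by positivity) (gs_nonneg _)), mgs4]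

section rec
variable (n : ℕ)

lemma split_lintegral (G : (Fin (n+2) → ℝ) → ℝ) (hG : Continuous G) :
    (∫⁻ θ : Fin (n+2) → ℝ, ENNReal.ofReal (G θ))
      = ∫⁻ y : Fin (n+1) → ℝ, ∫⁻ x : ℝ,
          ENNReal.ofReal (G (Fin.insertNth (Fin.last (n+1)) x y)) := by
  have hmp := measurePreserving_piFinSuccAbove (fun _ : Fin (n+2) => (volume : Measure ℝ))
    (Fin.last (n+1))
  set e := MeasurableEquiv.piFinSuccAbove (fun _ : Fin (n+2) => ℝ) (Fin.last (n+1)) with he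
  have hg : Measurable fun z : ℝ × (Fin (n+1) → ℝ) =>
      ENNReal.ofReal (G (e.symm z)) :=
    ENNReal.measurable_ofReal.comp (hG.measurable.comp e.symm.measurable)
  have h1 : (∫⁻ θ : Fin (n+2) → ℝ, ENNReal.ofReal (G θ))
      = ∫⁻ θ : Fin (n+2) → ℝ, ENNReal.ofReal (G (e.symm (e θ))) := by
    simp only [MeasurableEquiv.symm_apply_apply]
  rw [h1, volume_pi, hmp.lintegral_comp hg, lintegral_prod_symm _ hg.aemeasurable]
  rw [show (Measure.pi fun _ : Fin (n+1) => (volume : Measure ℝ)) = volume from volume_pi.symm]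
  rfl

end rec

lemma mF_meas (n : ℕ) : Measurable fun y : Fin (n+1) → ℝ => ENNReal.ofReal (F n y) :=
  ENNReal.measurable_ofReal.comp (F_continuous n).measurable

lemma quad_meas (a : ℝ) : Measurable fun x : ℝ => ENNReal.ofReal (x^2*(x-a)^2 * gs x) :=
  ENNReal.measurable_ofReal.comp
    (((continuous_pow 2).mul ((continuous_id.sub continuous_const).pow 2)).mul
      gs_continuous).measurable

lemma sext_meas (a : ℝ) : Measurable fun x : ℝ => ENNReal.ofReal (x^2*x^2*(x-a)^2 * gs x) :=
  ENNReal.measurable_ofReal.comp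
    ((((continuous_pow 2).mul (continuous_pow 2)).mul
      ((continuous_id.sub continuous_const).pow 2)).mul gs_continuous).measurable

lemma quad_nonneg (a x : ℝ) : 0 ≤ x^2*(x-a)^2 * gs x :=
  mul_nonneg (mul_nonneg (sq_nonneg _) (sq_nonneg _)) (gs_nonneg _)

lemma sext_nonneg (a x : ℝ) : 0 ≤ x^2*x^2*(x-a)^2 * gs x :=
  mul_nonneg (mul_nonneg (mul_nonneg (sq_nonneg _) (sq_nonneg _)) (sq_nonneg _)) (gs_nonneg _)

lemma outer_split (n : ℕ) :
    (∫⁻ y : Fin (n+1) → ℝ,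
        ENNReal.ofReal (F n y) * ENNReal.ofReal (3 + y (Fin.last n) ^ 2))
      = ENNReal.ofReal 3 * A n + B n := by
  have h3 : ∀ y : Fin (n+1) → ℝ, ENNReal.ofReal (3 + y (Fin.last n)^2)
      = ENNReal.ofReal 3 + ENNReal.ofReal (y (Fin.last n)^2) := fun y =>
    ENNReal.ofReal_add (by norm_num) (sq_nonneg _)
  simp_rw [h3, mul_add]
  rw [lintegral_add_left ((mF_meas n).fun_mul measurable_const)]
  congr 1
  · simp_rw [mul_comm (ENNReal.ofReal (F _ _)) (ENNReal.ofReal 3)]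
    rw [lintegral_const_mul _ (mF_meas n)]
    rfl
  · unfold B
    congr 1
    funext y
    rw [← ENNReal.ofReal_mul (F_nonneg n y)]

lemma outer_split' (n : ℕ) :
    (∫⁻ y : Fin (n+1) → ℝ,
        ENNReal.ofReal (F n y) * ENNReal.ofReal (15 + 3 * y (Fin.last n) ^ 2))
      = ENNReal.ofReal 15 * A n + ENNReal.ofReal 3 * B n := by
  have h3 : ∀ y : Fin (n+1) → ℝ, ENNReal.ofReal (15 + 3 * y (Fin.last n)^2)
      = ENNReal.ofReal 15 + ENNReal.ofReal 3 * ENNReal.ofReal (y (Fin.last n)^2) := fun y => by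
    rw [← ENNReal.ofReal_mul (by norm_num), ENNReal.ofReal_add (by norm_num) (by positivity)]
  simp_rw [h3, mul_add]
  rw [lintegral_add_left ((mF_meas n).fun_mul measurable_const)]
  congr 1
  · simp_rw [mul_comm (ENNReal.ofReal (F _ _)) (ENNReal.ofReal 15)]
    rw [lintegral_const_mul _ (mF_meas n)]
    rfl
  · have hcomm : ∀ y : Fin (n+1) → ℝ, ENNReal.ofReal (F n y) *
        (ENNReal.ofReal 3 * ENNReal.ofReal (y (Fin.last n)^2))
        = ENNReal.ofReal 3 * (ENNReal.ofReal (F n y) * ENNReal.ofReal (y (Fin.last n)^2)) :=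
      fun y => mul_left_comm _ _ _
    simp_rw [hcomm]
    have hm : Measurable fun y : Fin (n+1) → ℝ =>
        ENNReal.ofReal (F n y) * ENNReal.ofReal (y (Fin.last n)^2) :=
      (mF_meas n).mul
        (ENNReal.measurable_ofReal.comp ((measurable_pi_apply _).pow measurable_const))
    rw [lintegral_const_mul _ hm]
    unfold B
    congr 1
    apply lintegral_congr
    intro y
    rw [← ENNReal.ofReal_mul (F_nonneg n y)]

lemma A_succ (n : ℕ) : A (n+1) = ENNReal.ofReal 3 * A n + B n := by
  unfold A
  rw [split_lintegral n (F (n+1)) (F_continuous (n+1))]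
  have hinner : ∀ y : Fin (n+1) → ℝ,
      (∫⁻ x : ℝ, ENNReal.ofReal (F (n+1) (Fin.insertNth (Fin.last (n+1)) x y)))
        = ENNReal.ofReal (F n y) * ENNReal.ofReal (3 + y (Fin.last n) ^ 2) := by
    intro y
    simp_rw [F_succ n _ y, ENNReal.ofReal_mul (F_nonneg n y)]
    rw [lintegral_const_mul _ (quad_meas (y (Fin.last n)))]
    congr 1
    rw [← ofReal_integral_eq_lintegral_ofReal (integrable_quad (y (Fin.last n)))
      (Filter.Eventually.of_forall (quad_nonneg _)), int_quad]
  simp_rw [hinner]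
  exact outer_split n

lemma B_succ (n : ℕ) : B (n+1) = ENNReal.ofReal 15 * A n + ENNReal.ofReal 3 * B n := by
  unfold B
  have hc : Continuous (fun θ : Fin (n+2) → ℝ => F (n+1) θ * θ (Fin.last (n+1)) ^ 2) :=
    (F_continuous (n+1)).mul ((continuous_apply _).pow 2)
  rw [split_lintegral n _ hc]
  have hinner : ∀ y : Fin (n+1) → ℝ,
      (∫⁻ x : ℝ, ENNReal.ofReal (F (n+1) (Fin.insertNth (Fin.last (n+1)) x y)
          * (Fin.insertNth (Fin.last (n+1)) x y : Fin (n+2) → ℝ) (Fin.last (n+1)) ^ 2))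
        = ENNReal.ofReal (F n y) * ENNReal.ofReal (15 + 3 * y (Fin.last n) ^ 2) := by
    intro y
    have hre : ∀ x : ℝ, F (n+1) (Fin.insertNth (Fin.last (n+1)) x y)
        * (Fin.insertNth (Fin.last (n+1)) x y : Fin (n+2) → ℝ) (Fin.last (n+1)) ^ 2
        = F n y * (x^2*x^2*(x - y (Fin.last n))^2 * gs x) := by
      intro x
      rw [F_succ n x y, Fin.insertNth_apply_same]
      ring
    simp_rw [hre, ENNReal.ofReal_mul (F_nonneg n y)]
    rw [lintegral_const_mul _ (sext_meas (y (Fin.last n)))]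
    congr 1
    rw [← ofReal_integral_eq_lintegral_ofReal (integrable_sext (y (Fin.last n)))
      (Filter.Eventually.of_forall (sext_nonneg _)), int_sext]
  simp_rw [hinner]
  exact outer_split' n


noncomputable def pp : ℕ → ℝ × ℝ
  | 0 => (1, 3)
  | n+1 => (3 * (pp n).1 + (pp n).2, 15 * (pp n).1 + 3 * (pp n).2)

lemma pp_pos (n : ℕ) : 0 < (pp n).1 ∧ 0 < (pp n).2 := by
  induction n with
  | zero => refine ⟨one_pos, by norm_num [pp]⟩
  | succ n ih => exact ⟨by simp only [pp]; linarith [ih.1, ih.2],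
      by simp only [pp]; linarith [ih.1, ih.2]⟩

lemma pp_mul (n : ℕ) :
    2 * Real.sqrt 15 * (pp n).1
        = (3 + Real.sqrt 15) ^ (n+1) - (3 - Real.sqrt 15) ^ (n+1) ∧
    2 * (pp n).2 = (3 + Real.sqrt 15) ^ (n+1) + (3 - Real.sqrt 15) ^ (n+1) := by
  have hs : Real.sqrt 15 ^ 2 = 15 := Real.sq_sqrt (by norm_num)
  induction n with
  | zero =>
    constructor
    · show 2 * Real.sqrt 15 * 1 = _
      rw [pow_one, pow_one]; ring
    · show 2 * 3 = _
      rw [pow_one, pow_one]; ring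
  | succ n ih =>
    constructor
    · show 2 * Real.sqrt 15 * (3 * (pp n).1 + (pp n).2) = _
      rw [pow_succ (3 + Real.sqrt 15) (n+1), pow_succ (3 - Real.sqrt 15) (n+1)]
      linear_combination 3 * ih.1 + Real.sqrt 15 * ih.2
    · show 2 * (15 * (pp n).1 + 3 * (pp n).2) = _
      rw [pow_succ (3 + Real.sqrt 15) (n+1), pow_succ (3 - Real.sqrt 15) (n+1)]
      linear_combination Real.sqrt 15 * ih.1 + 3 * ih.2 - 2 * (pp n).1 * hs

lemma pp_closed (n : ℕ) :
    (pp n).1 = ((3 + Real.sqrt 15) ^ (n+1) - (3 - Real.sqrt 15) ^ (n+1)) / (2 * Real.sqrt 15) := by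
  have hs0 : (0:ℝ) < Real.sqrt 15 := Real.sqrt_pos.2 (by norm_num)
  rw [eq_div_iff (by positivity)]
  linear_combination (pp_mul n).1

lemma AB_eq (n : ℕ) : A n = ENNReal.ofReal (pp n).1 ∧ B n = ENNReal.ofReal (pp n).2 := by
  induction n with
  | zero => exact ⟨A_zero, B_zero⟩
  | succ n ih =>
    have h1 := (pp_pos n).1.le
    have h2 := (pp_pos n).2.le
    constructor
    · rw [A_succ, ih.1, ih.2, ← ENNReal.ofReal_mul (by norm_num),
        ← ENNReal.ofReal_add (by positivity) h2]
      rfl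
    · rw [B_succ, ih.1, ih.2, ← ENNReal.ofReal_mul (by norm_num),
        ← ENNReal.ofReal_mul (by norm_num), ← ENNReal.ofReal_add (by positivity) (by positivity)]
      rfl

lemma density_eq (n : ℕ) (θ : Fin (n+1) → ℝ) :
    (2 * π) ^ (-((n : ℝ) + 1) / 2) * Real.exp (-(∑ j, (θ j) ^ 2) / 2)
      = ∏ j, gs (θ j) := by
  unfold gs
  rw [Finset.prod_mul_distrib, Finset.prod_const, Finset.card_univ, Fintype.card_fin,
    ← Real.exp_sum]
  congr 1
  · rw [← Real.rpow_natCast ((2 * π) ^ (-(1:ℝ)/2)) (n+1),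
      ← Real.rpow_mul (by positivity)]
    congr 1
    push_cast
    ring
  · congr 1
    rw [← Finset.sum_div, ← Finset.sum_neg_distrib]

/-- With σ² = 1, the fusion-pMOM density integrates to 1: the Gaussian moment
∫_{ℝ^p} (∏ θ_j²)(∏ (θ_j - θ_{j-1})²)(2π)^{-p/2} exp(-‖θ‖²/2) dθ equals
1/C_p = ((3+√15)^p - (3-√15)^p)/(2√15), where p = n+1 ≥ 1. -/
theorem fusion_pMOM_integrates_to_one (n : ℕ) :
    (∫ θ : Fin (n + 1) → ℝ,
        ((∏ j, (θ j) ^ 2) * ∏ j : Fin n, (θ j.succ - θ j.castSucc) ^ 2) *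
          ((2 * π) ^ (-((n : ℝ) + 1) / 2) * Real.exp (-(∑ j, (θ j) ^ 2) / 2))) =
      ((3 + Real.sqrt 15) ^ (n + 1) - (3 - Real.sqrt 15) ^ (n + 1)) /
        (2 * Real.sqrt 15) ∧
    (2 * Real.sqrt 15 /
        ((3 + Real.sqrt 15) ^ (n + 1) - (3 - Real.sqrt 15) ^ (n + 1))) *
      (∫ θ : Fin (n + 1) → ℝ,
        ((∏ j, (θ j) ^ 2) * ∏ j : Fin n, (θ j.succ - θ j.castSucc) ^ 2) *
          ((2 * π) ^ (-((n : ℝ) + 1) / 2) * Real.exp (-(∑ j, (θ j) ^ 2) / 2))) = 1 := by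
  have hs0 : (0:ℝ) < Real.sqrt 15 := Real.sqrt_pos.2 (by norm_num)
  have hint : (∫ θ : Fin (n + 1) → ℝ,
      ((∏ j, (θ j) ^ 2) * ∏ j : Fin n, (θ j.succ - θ j.castSucc) ^ 2) *
        ((2 * π) ^ (-((n : ℝ) + 1) / 2) * Real.exp (-(∑ j, (θ j) ^ 2) / 2))) = (pp n).1 := by
    have heq : ∀ θ : Fin (n+1) → ℝ,
        ((∏ j, (θ j) ^ 2) * ∏ j : Fin n, (θ j.succ - θ j.castSucc) ^ 2) *
          ((2 * π) ^ (-((n : ℝ) + 1) / 2) * Real.exp (-(∑ j, (θ j) ^ 2) / 2)) = F n θ := by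
      intro θ; rw [density_eq n θ]; rfl
    simp_rw [heq]
    rw [integral_eq_lintegral_of_nonneg_ae (Filter.Eventually.of_forall (F_nonneg n))
      (F_continuous n).aestronglyMeasurable]
    rw [show (∫⁻ θ : Fin (n+1) → ℝ, ENNReal.ofReal (F n θ)) = A n from rfl,
      (AB_eq n).1, ENNReal.toReal_ofReal (pp_pos n).1.le]
  have hX : (3 + Real.sqrt 15) ^ (n + 1) - (3 - Real.sqrt 15) ^ (n + 1)
      = 2 * Real.sqrt 15 * (pp n).1 := by
    rw [pp_closed n]; field_simp
  refine ⟨by rw [hint, pp_closed n], ?_⟩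
  rw [hint, hX]
  have h1 : (pp n).1 ≠ 0 := ne_of_gt (pp_pos n).1
  field_simp
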